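/- A Boolean relation ρ ⊆ {0,1}^r is essentially a downset (it can be written as a conjunction of a downset and binary equality relations, i.e., identifying duplicate coordinates yields a downset) if and only if it is invariant under the operation sub(x,y) = min(x, ¬y) applied componentwise. -/
import Mathlib


/-- The Boolean operation `sub(x,y) = min(x, ¬y)`. -/
def bsub (a b : Bool) : Bool := a && !b

/-- A relation `ρ ⊆ {0,1}^r` is essentially a downset: there is a map `s` sending every
coordinate to a representative duplicate coordinate such that every member of `ρ` respects
these duplications, and within tuples respecting the duplications, `ρ` is downward closed
(i.e., removing duplicate coordinates yields a downset). -/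
def EssentiallyDownset {r : ℕ} (ρ : Set (Fin r → Bool)) : Prop :=
  ∃ s : Fin r → Fin r,
    (∀ x ∈ ρ, ∀ i, x i = x (s i)) ∧
    (∀ x ∈ ρ, ∀ y : Fin r → Bool, (∀ i, y i = y (s i)) → (∀ i, y i ≤ x i) → y ∈ ρ)

private lemma min'_same {α : Type*} [LinearOrder α] {A B : Finset α} (h : A = B)
    (hA : A.Nonempty) (hB : B.Nonempty) : A.min' hA = B.min' hB := by subst h; rfl

/-- A Boolean relation is essentially a downset iff it is invariant under `sub`. -/
theorem stmt4 {r : ℕ} (ρ : Set (Fin r → Bool)) :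
    EssentiallyDownset ρ ↔
      ∀ x ∈ ρ, ∀ y ∈ ρ, (fun i => bsub (x i) (y i)) ∈ ρ := by
  constructor
  · rintro ⟨s, hdup, hdown⟩ x hx y hy
    exact hdown x hx _ (fun i => by simp [bsub, hdup x hx i, hdup y hy i])
      (fun i => by cases hx' : x i <;> cases hy' : y i <;> simp [bsub, hx', hy'])
  · intro h
    classical
    -- `ρ` is closed under meets
    have hmeet : ∀ x ∈ ρ, ∀ y ∈ ρ, (fun i => x i && y i) ∈ ρ := by
      intro x hx y hy
      have hmem := h x hx _ (h x hx y hy)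
      have heq : (fun i => bsub (x i) (bsub (x i) (y i))) = (fun i => x i && y i) :=
        funext fun i => by cases x i <;> cases y i <;> rfl
      rwa [heq] at hmem
    -- the duplication relation
    set E : Fin r → Fin r → Prop := fun i j => ∀ z ∈ ρ, z i = z j with hE
    have hErefl : ∀ i, E i i := fun i z _ => rfl
    have hEsymm : ∀ {i j}, E i j → E j i := fun hij z hz => (hij z hz).symm
    have hEtrans : ∀ {i j k}, E i j → E j k → E i k :=
      fun hij hjk z hz => (hij z hz).trans (hjk z hz)
    have hne : ∀ i, (Finset.univ.filter (fun j => E i j)).Nonempty :=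
      fun i => ⟨i, Finset.mem_filter.mpr ⟨Finset.mem_univ i, hErefl i⟩⟩
    set s : Fin r → Fin r := fun i => (Finset.univ.filter (fun j => E i j)).min' (hne i)
      with hs
    have hEs : ∀ i, E i (s i) := by
      intro i
      have := Finset.min'_mem _ (hne i)
      simpa using this
    have hscongr : ∀ {i j}, E i j → s i = s j := by
      intro i j hij
      have hset : (Finset.univ.filter (fun k => E i k)) = Finset.univ.filter (fun k => E j k) := by
        ext k
        simp only [Finset.mem_filter, Finset.mem_univ, true_and]
        exact ⟨fun h' => hEtrans (hEsymm hij) h', fun h' => hEtrans hij h'⟩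
      exact min'_same hset (hne i) (hne j)
    -- existence of the minimal element of ρ which is true at i
    have hm : ∀ i : Fin r, ∀ x ∈ ρ, x i = true →
        ∃ m ∈ ρ, ∀ j, (m j = true ↔ ∀ z ∈ ρ, z i = true → z j = true) := by
      intro i x hx hxi
      have key : ∀ (S : Finset (Fin r → Bool)) (hS : S.Nonempty), (∀ z ∈ S, z ∈ ρ) →
          ∃ m ∈ ρ, ∀ j, (m j = true ↔ ∀ z ∈ S, z j = true) := by
        intro S hS
        induction hS using Finset.Nonempty.cons_induction with
        | singleton a =>
          intro ha
          exact ⟨a, ha a (by simp), fun j => by simp⟩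
        | cons a S' hnotmem hS' ih =>
          intro hmem
          obtain ⟨m', hm'ρ, hm'spec⟩ := ih (fun z hz => hmem z (Finset.mem_cons_of_mem hz))
          refine ⟨fun j => a j && m' j, hmeet a (hmem a (Finset.mem_cons_self _ _)) m' hm'ρ, ?_⟩
          intro j
          simp only [Bool.and_eq_true, hm'spec j, Finset.mem_cons]
          constructor
          · rintro ⟨ha, hm'⟩ z (rfl | hz)
            · exact ha
            · exact hm' z hz
          · intro hall
            exact ⟨hall a (Or.inl rfl), fun z hz => hall z (Or.inr hz)⟩
      set S : Finset (Fin r → Bool) := Finset.univ.filter (fun z => z ∈ ρ ∧ z i = true) with hSdef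
      have hSne : S.Nonempty := ⟨x, by simp [hSdef, hx, hxi]⟩
      have hSsub : ∀ z ∈ S, z ∈ ρ := by
        intro z hz
        simp only [hSdef, Finset.mem_filter] at hz
        exact hz.2.1
      obtain ⟨m, hmρ, hmspec⟩ := key S hSne hSsub
      refine ⟨m, hmρ, fun j => ?_⟩
      rw [hmspec j]
      constructor
      · intro hall z hz hzi
        exact hall z (by simp [hSdef, hz, hzi])
      · intro hall z hz
        simp only [hSdef, Finset.mem_filter] at hz
        exact hall z hz.2.1 hz.2.2
    -- main downward-closure claim, by strong induction on the number of differing coordinates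
    have main : ∀ n : ℕ, ∀ x ∈ ρ, ∀ y : Fin r → Bool, (∀ i, y i = y (s i)) →
        (∀ i, y i ≤ x i) → (Finset.univ.filter (fun j => x j ≠ y j)).card = n → y ∈ ρ := by
      intro n
      induction n using Nat.strong_induction_on with
      | _ n ih =>
        intro x hx y hys hyx hcard
        by_cases hempty : ∀ j, x j = y j
        · have : y = x := funext fun j => (hempty j).symm
          rwa [this]
        · push_neg at hempty
          obtain ⟨i, hi⟩ := hempty
          have hxi : x i = true := by
            have := hyx i
            revert this hi
            cases x i <;> cases y i <;> simp
          have hyi : y i = false := by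
            have := hyx i
            revert this hi
            cases x i <;> cases y i <;> simp
          obtain ⟨m, hmρ, hmspec⟩ := hm i x hx hxi
          set x' : Fin r → Bool := fun j => bsub (x j) (m j) with hx'def
          have hx'ρ : x' ∈ ρ := h x hx m hmρ
          have hyx' : ∀ j, y j ≤ x' j := by
            intro j
            cases hyj : y j
            · simp
            · -- y j = true, so x j = true; show m j = false
              have hxj : x j = true := by
                have := hyx j; rw [hyj] at this
                revert this; cases x j <;> simp
              have hmj : m j = false := by
                by_contra hmj
                rw [Bool.not_eq_false] at hmj
                have hij : E i j := by
                  intro z hz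
                  cases hzi : z i
                  · cases hzj : z j
                    · rfl
                    · -- z i = false, z j = true: build a witness with i true, j false
                      exfalso
                      have hw : (fun k => bsub (x k) (z k)) ∈ ρ := h x hx z hz
                      have := (hmspec j).mp hmj _ hw
                      simp only [bsub, hzi, hzj, hxi, hxj] at this
                      exact absurd (this (by rfl)) (by simp)
                  · exact ((hmspec j).mp hmj z hz hzi).symm
                have : y i = y j := by
                  rw [hys i, hys j, hscongr hij]
                rw [hyi, hyj] at this
                exact absurd this (by simp)
              simp [hx'def, bsub, hxj, hmj]
          have hmi : m i = true := (hmspec i).mpr (fun z _ hzi => hzi)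
          have hx'i : x' i = false := by simp [hx'def, bsub, hmi]
          have hsubset : (Finset.univ.filter (fun j => x' j ≠ y j)) ⊂
              (Finset.univ.filter (fun j => x j ≠ y j)) := by
            constructor
            · intro j hj
              simp only [Finset.mem_filter, Finset.mem_univ, true_and] at hj ⊢
              intro hxy
              apply hj
              have := hyx' j
              have h2 := hyx j
              revert this h2 hxy
              simp only [hx'def, bsub]
              cases x j <;> cases y j <;> cases m j <;> simp
            · intro hsub
              have hi' : i ∈ Finset.univ.filter (fun j => x j ≠ y j) := by
                simp [hi]
              have := hsub hi'
              simp only [Finset.mem_filter, Finset.mem_univ, true_and] at this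
              rw [hx'i, hyi] at this
              exact this rfl
          have hlt : (Finset.univ.filter (fun j => x' j ≠ y j)).card < n :=
            hcard ▸ Finset.card_lt_card hsubset
          exact ih _ hlt x' hx'ρ y hys hyx' rfl
    exact ⟨s, fun x hx i => hEs i x hx, fun x hx y hys hyx => main _ x hx y hys hyx rfl⟩
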